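/- Let d ≥ 2, α > β > 0, and let u, v ∈ ℝ² (or ℝⁿ) be distinct unit vectors with ⟨u,v⟩ ≥ 0. Then the function w ↦ α⟨u,w⟩^d - β⟨v,w⟩^d on the unit sphere has exactly one pair ±w* of global maximizers of its absolute value; equivalently, the tensor A = αu^{⊗d} - βv^{⊗d} has exactly one best symmetric rank-one approximation. -/

import Mathlib

open Real Set

noncomputable def pf (d : ℕ) (x : ℝ) : ℝ := Real.cos x ^ (d - 1) * Real.sin x

noncomputable def Ff (d : ℕ) (α β γ : ℝ) (θ : ℝ) : ℝ :=
  α * Real.cos θ ^ d - β * Real.cos (θ - γ) ^ d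

lemma hasDerivAt_Ff (d : ℕ) (α β γ θ : ℝ) :
    HasDerivAt (Ff d α β γ) ((d : ℝ) * (β * pf d (θ - γ) - α * pf d θ)) θ := by
  have h1 : HasDerivAt (fun x : ℝ => Real.cos x ^ d)
      ((d : ℝ) * Real.cos θ ^ (d - 1) * (-Real.sin θ)) θ := (Real.hasDerivAt_cos θ).pow d
  have h0 : HasDerivAt (fun x : ℝ => x - γ) 1 θ := (hasDerivAt_id θ).sub_const γ
  have h2 : HasDerivAt (fun x : ℝ => Real.cos (x - γ) ^ d)
      (((d : ℝ) * Real.cos (θ - γ) ^ (d - 1) * (-Real.sin (θ - γ))) * 1) θ :=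
    (((Real.hasDerivAt_cos (θ - γ)).comp (h₂ := Real.cos) (h := fun x : ℝ => x - γ) θ h0).pow d).congr_deriv (by simp only [Function.comp]; ring)
  have := ((h1.const_mul α).fun_sub (h2.const_mul β))
  refine this.congr_deriv ?_
  simp [pf]; ring

lemma key_sin_pow {d : ℕ} (hd : 2 ≤ d) {a b : ℝ} (ha : 0 ≤ a) (hb : 0 ≤ b)
    (hab : a + b ≤ π / 2) :
    Real.sin a ^ d + Real.sin b ^ d ≤ Real.sin (a + b) ^ d := by
  have pa := Real.sin_sq_add_cos_sq a
  have pb := Real.sin_sq_add_cos_sq b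
  have hsq : Real.sin a ^ 2 + Real.sin b ^ 2 ≤ Real.sin (a + b) ^ 2 := by
    have hid : Real.sin (a + b) ^ 2 - Real.sin a ^ 2 - Real.sin b ^ 2
        = 2 * Real.sin a * Real.sin b * Real.cos (a + b) := by
      rw [Real.sin_add, Real.cos_add]
      linear_combination Real.sin a ^ 2 * pb + Real.sin b ^ 2 * pa
    nlinarith [mul_nonneg (mul_nonneg (mul_nonneg (by norm_num : (0:ℝ) ≤ 2)
        (Real.sin_nonneg_of_nonneg_of_le_pi ha (by nlinarith [Real.pi_pos])))
        (Real.sin_nonneg_of_nonneg_of_le_pi hb (by nlinarith [Real.pi_pos])))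
        (Real.cos_nonneg_of_mem_Icc ⟨by linarith, hab⟩)]
  have hsa : Real.sin a ≤ Real.sin (a + b) := by
    apply Real.strictMonoOn_sin.monotoneOn ⟨by linarith [Real.pi_pos], by linarith⟩
      ⟨by linarith [Real.pi_pos], hab⟩ (by linarith)
  have hsb : Real.sin b ≤ Real.sin (a + b) := by
    apply Real.strictMonoOn_sin.monotoneOn ⟨by linarith [Real.pi_pos], by linarith⟩
      ⟨by linarith [Real.pi_pos], hab⟩ (by linarith)
  have hsa0 : 0 ≤ Real.sin a := Real.sin_nonneg_of_nonneg_of_le_pi ha (by nlinarith [Real.pi_pos])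
  have hsb0 : 0 ≤ Real.sin b := Real.sin_nonneg_of_nonneg_of_le_pi hb (by nlinarith [Real.pi_pos])
  calc Real.sin a ^ d + Real.sin b ^ d
      = Real.sin a ^ 2 * Real.sin a ^ (d - 2) + Real.sin b ^ 2 * Real.sin b ^ (d - 2) := by
        rw [← pow_add, ← pow_add]; congr 2 <;> omega
    _ ≤ Real.sin a ^ 2 * Real.sin (a+b) ^ (d - 2) + Real.sin b ^ 2 * Real.sin (a+b) ^ (d - 2) := by
        gcongr
    _ = (Real.sin a ^ 2 + Real.sin b ^ 2) * Real.sin (a+b) ^ (d - 2) := by ring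
    _ ≤ Real.sin (a+b) ^ 2 * Real.sin (a+b) ^ (d - 2) := by
        gcongr
        exact pow_nonneg (le_trans hsa0 hsa) _
    _ = Real.sin (a+b) ^ d := by rw [← pow_add]; congr 1; omega

lemma exists_angle {x y : ℝ} (h : x ^ 2 + y ^ 2 = 1) :
    ∃ θ : ℝ, Real.cos θ = x ∧ Real.sin θ = y := by
  have hx1 : -1 ≤ x := by nlinarith
  have hx2 : x ≤ 1 := by nlinarith
  have hsq : Real.sqrt (1 - x ^ 2) = |y| := by
    rw [show (1 : ℝ) - x ^ 2 = y ^ 2 by linarith, Real.sqrt_sq_eq_abs]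
  rcases le_or_gt 0 y with hy | hy
  · exact ⟨Real.arccos x, Real.cos_arccos hx1 hx2, by
      rw [Real.sin_arccos, hsq, abs_of_nonneg hy]⟩
  · exact ⟨-Real.arccos x, by rw [Real.cos_neg]; exact Real.cos_arccos hx1 hx2, by
      rw [Real.sin_neg, Real.sin_arccos, hsq, abs_of_neg hy, neg_neg]⟩

-- positivity of pf on (0, π/2)
lemma pf_pos {d : ℕ} {x : ℝ} (hx0 : 0 < x) (hx1 : x < π / 2) : 0 < pf d x :=
  mul_pos (pow_pos (Real.cos_pos_of_mem_Ioo ⟨by linarith [Real.pi_pos], hx1⟩) _)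
    (Real.sin_pos_of_pos_of_lt_pi hx0 (by nlinarith [Real.pi_pos]))

lemma hasDerivAt_pf (d : ℕ) (x : ℝ) :
    HasDerivAt (pf d) ((↑(d-1) * Real.cos x ^ (d - 1 - 1) * (-Real.sin x)) * Real.sin x
      + Real.cos x ^ (d-1) * Real.cos x) x :=
  ((Real.hasDerivAt_cos x).pow (d-1)).mul (Real.hasDerivAt_sin x)

-- the log-derivative comparison : for 0 < a < b < π/2 the "ratio" inequality
lemma ratio_lt {d : ℕ} (hd : 2 ≤ d) {a b : ℝ} (ha : 0 < a) (hab : a < b) (hb : b < π / 2) :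
    ((↑(d-1) * Real.cos b ^ (d - 1 - 1) * (-Real.sin b)) * Real.sin b
      + Real.cos b ^ (d-1) * Real.cos b) / pf d b
    < ((↑(d-1) * Real.cos a ^ (d - 1 - 1) * (-Real.sin a)) * Real.sin a
      + Real.cos a ^ (d-1) * Real.cos a) / pf d a := by
  have hpa : 0 < pf d a := pf_pos ha (by linarith)
  have hpb : 0 < pf d b := pf_pos (by linarith) hb
  rw [div_lt_div_iff₀ hpb hpa]
  have hca : 0 < Real.cos a := Real.cos_pos_of_mem_Ioo ⟨by linarith [Real.pi_pos], by linarith⟩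
  have hcb : 0 < Real.cos b := Real.cos_pos_of_mem_Ioo ⟨by linarith [Real.pi_pos], hb⟩
  have hsa : 0 < Real.sin a := Real.sin_pos_of_pos_of_lt_pi ha (by nlinarith [Real.pi_pos])
  have hsb : 0 < Real.sin b := Real.sin_pos_of_pos_of_lt_pi (by linarith) (by nlinarith [Real.pi_pos])
  have hsub : 0 < Real.sin (b - a) :=
    Real.sin_pos_of_pos_of_lt_pi (by linarith) (by nlinarith [Real.pi_pos])
  have he1 : (1 : ℝ) ≤ ↑(d-1) := by exact_mod_cast Nat.one_le_iff_ne_zero.mpr (by omega)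
  set e : ℝ := ↑(d-1) with hedef
  -- rewrite the exponents : d-1 = (d-2)+1, d-1-1 = d-2
  have hexp1 : d - 1 = (d - 2) + 1 := by omega
  have hexp2 : d - 1 - 1 = d - 2 := by omega
  rw [hexp2]
  have hpfa : pf d a = Real.cos a ^ (d-2) * (Real.cos a * Real.sin a) := by
    rw [pf, hexp1, pow_succ]; ring
  have hpfb : pf d b = Real.cos b ^ (d-2) * (Real.cos b * Real.sin b) := by
    rw [pf, hexp1, pow_succ]; ring
  have hda : (e * Real.cos a ^ (d - 2) * (-Real.sin a)) * Real.sin a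
      + Real.cos a ^ (d-1) * Real.cos a
      = Real.cos a ^ (d-2) * (Real.cos a ^ 2 - e * Real.sin a ^ 2) := by
    rw [hexp1, pow_succ]; ring
  have hdb : (e * Real.cos b ^ (d - 2) * (-Real.sin b)) * Real.sin b
      + Real.cos b ^ (d-1) * Real.cos b
      = Real.cos b ^ (d-2) * (Real.cos b ^ 2 - e * Real.sin b ^ 2) := by
    rw [hexp1, pow_succ]; ring
  rw [hda, hdb, hpfa, hpfb]
  have hbracket : (Real.cos b ^ 2 - e * Real.sin b ^ 2) * (Real.cos a * Real.sin a)
      < (Real.cos a ^ 2 - e * Real.sin a ^ 2) * (Real.cos b * Real.sin b) := by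
    have hident : (Real.cos a ^ 2 - e * Real.sin a ^ 2) * (Real.cos b * Real.sin b)
        - (Real.cos b ^ 2 - e * Real.sin b ^ 2) * (Real.cos a * Real.sin a)
        = (Real.cos a * Real.cos b + e * Real.sin a * Real.sin b) * Real.sin (b - a) := by
      rw [Real.sin_sub]; ring
    nlinarith [mul_pos (add_pos (mul_pos hca hcb)
      (mul_pos (mul_pos (by linarith : (0:ℝ) < e) hsa) hsb)) hsub]
  calc Real.cos b ^ (d-2) * (Real.cos b ^ 2 - e * Real.sin b ^ 2)
      * (Real.cos a ^ (d-2) * (Real.cos a * Real.sin a))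
      = (Real.cos a ^ (d-2) * Real.cos b ^ (d-2))
        * ((Real.cos b ^ 2 - e * Real.sin b ^ 2) * (Real.cos a * Real.sin a)) := by ring
    _ < (Real.cos a ^ (d-2) * Real.cos b ^ (d-2))
        * ((Real.cos a ^ 2 - e * Real.sin a ^ 2) * (Real.cos b * Real.sin b)) := by
        apply mul_lt_mul_of_pos_left hbracket
        exact mul_pos (pow_pos hca _) (pow_pos hcb _)
    _ = Real.cos a ^ (d-2) * (Real.cos a ^ 2 - e * Real.sin a ^ 2)
        * (Real.cos b ^ (d-2) * (Real.cos b * Real.sin b)) := by ring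

lemma G_strictAnti {d : ℕ} (hd : 2 ≤ d) {γ : ℝ} (hγ0 : 0 < γ) (hγ2 : γ ≤ π / 2) :
    StrictAntiOn (fun t => Real.log (pf d (t + γ)) - Real.log (pf d t))
      (Ioo 0 (π / 2 - γ)) := by
  have hderiv : ∀ t ∈ Ioo 0 (π / 2 - γ), HasDerivAt
      (fun t => Real.log (pf d (t + γ)) - Real.log (pf d t))
      (((↑(d-1) * Real.cos (t+γ) ^ (d - 1 - 1) * (-Real.sin (t+γ))) * Real.sin (t+γ)
        + Real.cos (t+γ) ^ (d-1) * Real.cos (t+γ)) / pf d (t+γ)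
       - ((↑(d-1) * Real.cos t ^ (d - 1 - 1) * (-Real.sin t)) * Real.sin t
        + Real.cos t ^ (d-1) * Real.cos t) / pf d t) t := by
    intro t ht
    obtain ⟨ht0, ht1⟩ := ht
    have hp1 : 0 < pf d (t + γ) := pf_pos (by linarith) (by linarith)
    have hp2 : 0 < pf d t := pf_pos ht0 (by linarith)
    have h1 : HasDerivAt (fun t => pf d (t + γ))
        (((↑(d-1) * Real.cos (t+γ) ^ (d - 1 - 1) * (-Real.sin (t+γ))) * Real.sin (t+γ)
          + Real.cos (t+γ) ^ (d-1) * Real.cos (t+γ)) * 1) t :=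
      HasDerivAt.comp (h₂ := pf d) (h := fun x : ℝ => id x + γ) t (hasDerivAt_pf d (t+γ)) ((hasDerivAt_id t).add_const γ)
    have h1' := (h1.log (ne_of_gt hp1))
    have h2' := ((hasDerivAt_pf d t).log (ne_of_gt hp2))
    have := h1'.fun_sub h2'
    refine this.congr_deriv ?_
    field_simp
  apply strictAntiOn_of_deriv_neg (convex_Ioo _ _)
  · exact fun t ht => (hderiv t ht).continuousAt.continuousWithinAt
  · intro t ht
    rw [interior_Ioo] at ht
    rw [(hderiv t ht).deriv]
    have := ratio_lt hd ht.1 (by linarith [hγ0] : t < t + γ) (by linarith [ht.2])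
    linarith

lemma crit_eq {d : ℕ} (hd : 2 ≤ d) {α β γ θ : ℝ}
    (h : ∀ t, Ff d α β γ t ≤ Ff d α β γ θ) :
    α * pf d θ = β * pf d (θ - γ) := by
  have hloc : IsLocalMax (Ff d α β γ) θ := Filter.Eventually.of_forall h
  have hder := hloc.deriv_eq_zero
  rw [(hasDerivAt_Ff d α β γ θ).deriv] at hder
  have hd0 : (d : ℝ) ≠ 0 := by positivity
  have := mul_eq_zero.mp hder
  rcases this with h | h
  · exact absurd h hd0
  · linarith

lemma pf_neg (d : ℕ) (x : ℝ) : pf d (-x) = -pf d x := by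
  simp [pf]

lemma uniq_in_K {d : ℕ} (hd : 2 ≤ d) {α β γ M : ℝ} (hβ : 0 < β) (hαβ : β < α)
    (hγ0 : 0 < γ) (hγ2 : γ ≤ π / 2)
    (hub : ∀ t, |Ff d α β γ t| ≤ M)
    {θ₁ θ₂ : ℝ} (h₁ : θ₁ ∈ Icc (γ - π/2) 0) (h₂ : θ₂ ∈ Icc (γ - π/2) 0)
    (hF₁ : Ff d α β γ θ₁ = M) (hF₂ : Ff d α β γ θ₂ = M) : θ₁ = θ₂ := by
  have hα : 0 < α := lt_trans hβ hαβ
  by_cases hγ : γ = π / 2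
  · subst hγ
    have e1 : θ₁ = 0 := le_antisymm h₁.2 (by have := h₁.1; linarith)
    have e2 : θ₂ = 0 := le_antisymm h₂.2 (by have := h₂.1; linarith)
    rw [e1, e2]
  have hγlt : γ < π / 2 := lt_of_le_of_ne hγ2 hγ
  have hcosγ : 0 < Real.cos γ := Real.cos_pos_of_mem_Ioo ⟨by linarith [Real.pi_pos], hγlt⟩
  have hsinγ : 0 < Real.sin γ := Real.sin_pos_of_pos_of_lt_pi hγ0 (by nlinarith [Real.pi_pos])
  -- both are critical points in the open interval
  have main : ∀ θ ∈ Icc (γ - π/2) 0, Ff d α β γ θ = M → θ ∈ Ioo (γ - π/2) 0 := by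
    intro θ hθ hFθ
    have hcrit : α * pf d θ = β * pf d (θ - γ) :=
      crit_eq hd (fun t => by calc Ff d α β γ t ≤ |Ff d α β γ t| := le_abs_self _
                                  _ ≤ M := hub t
                                  _ = Ff d α β γ θ := hFθ.symm)
    constructor
    · rcases lt_or_eq_of_le hθ.1 with h | h
      · exact h
      · exfalso
        rw [← h] at hcrit
        have hL : pf d (γ - π/2) = Real.sin γ ^ (d-1) * (- Real.cos γ) := by
          rw [pf, show γ - π/2 = -(π/2 - γ) by ring, Real.cos_neg, Real.sin_neg,
            Real.cos_pi_div_two_sub, Real.sin_pi_div_two_sub]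
        have hR : pf d (γ - π/2 - γ) = 0 := by
          rw [show γ - π/2 - γ = -(π/2) by ring, pf, Real.cos_neg, Real.cos_pi_div_two,
            zero_pow (by omega : d - 1 ≠ 0), zero_mul]
        rw [hL, hR] at hcrit
        have : α * (Real.sin γ ^ (d-1) * (- Real.cos γ)) < 0 := by
          have : 0 < Real.sin γ ^ (d-1) * Real.cos γ :=
            mul_pos (pow_pos hsinγ _) hcosγ
          nlinarith
        rw [mul_zero] at hcrit
        linarith
    · rcases lt_or_eq_of_le hθ.2 with h | h
      · exact h
      · exfalso
        rw [h] at hcrit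
        have hL : pf d 0 = 0 := by simp [pf]
        have hR : pf d (0 - γ) = - (Real.cos γ ^ (d-1) * Real.sin γ) := by
          rw [show (0:ℝ) - γ = -γ by ring, pf_neg, pf]
        rw [hL, hR, mul_zero] at hcrit
        have : 0 < Real.cos γ ^ (d-1) * Real.sin γ := mul_pos (pow_pos hcosγ _) hsinγ
        nlinarith
  have h₁' := main θ₁ h₁ hF₁
  have h₂' := main θ₂ h₂ hF₂
  -- transform to t = -θ and use strict antitonicity of G
  have key : ∀ θ ∈ Ioo (γ - π/2) 0, Ff d α β γ θ = M →
      (fun t => Real.log (pf d (t + γ)) - Real.log (pf d t)) (-θ)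
        = Real.log α - Real.log β ∧ -θ ∈ Ioo 0 (π/2 - γ) := by
    intro θ hθ hFθ
    have hmem : -θ ∈ Ioo 0 (π/2 - γ) := ⟨by linarith [hθ.2], by linarith [hθ.1]⟩
    have hcrit : α * pf d θ = β * pf d (θ - γ) :=
      crit_eq hd (fun t => by calc Ff d α β γ t ≤ |Ff d α β γ t| := le_abs_self _
                                  _ ≤ M := hub t
                                  _ = Ff d α β γ θ := hFθ.symm)
    have e1 : pf d θ = - pf d (-θ) := by rw [← pf_neg]; ring_nf
    have e2 : pf d (θ - γ) = - pf d (-θ + γ) := by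
      rw [← pf_neg]; ring_nf
    rw [e1, e2] at hcrit
    have hcrit' : α * pf d (-θ) = β * pf d (-θ + γ) := by linarith
    have hp1 : 0 < pf d (-θ) := pf_pos hmem.1 (by linarith [hmem.2])
    have hp2 : 0 < pf d (-θ + γ) := pf_pos (by linarith [hmem.1]) (by linarith [hmem.2])
    constructor
    · have := congrArg Real.log hcrit'
      rw [Real.log_mul (ne_of_gt hα) (ne_of_gt hp1),
        Real.log_mul (ne_of_gt hβ) (ne_of_gt hp2)] at this
      simp only
      linarith
    · exact hmem
  obtain ⟨hg1, hm1⟩ := key θ₁ h₁' hF₁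
  obtain ⟨hg2, hm2⟩ := key θ₂ h₂' hF₂
  have := (G_strictAnti hd hγ0 hγ2).injOn hm1 hm2 (by simp only at hg1 hg2; rw [hg1, hg2])
  linarith [neg_injective this]

lemma Ff_reflect (d : ℕ) (α β γ θ : ℝ) :
    Ff d α β γ (γ - θ) = α * Real.cos (θ - γ) ^ d - β * Real.cos θ ^ d := by
  rw [Ff, show γ - θ = -(θ - γ) by ring, Real.cos_neg,
    show -(θ - γ) - γ = -θ by ring, Real.cos_neg]

lemma exclude {d : ℕ} (hd : 2 ≤ d) {α β γ M θ : ℝ} (hβ : 0 < β) (hαβ : β < α)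
    (hγ0 : 0 < γ) (hγ2 : γ ≤ π / 2)
    (hub : ∀ t, |Ff d α β γ t| ≤ M) (hMpos : 0 < M)
    (hMlow : α * Real.sin γ ^ d ≤ M)
    (hθ : θ ∈ Icc (-(π/2)) (π/2)) (hFθ : Ff d α β γ θ = M) :
    θ ∈ Icc (γ - π/2) 0 := by
  have hα : 0 < α := lt_trans hβ hαβ
  have hπ := Real.pi_pos
  obtain ⟨hθ1, hθ2⟩ := hθ
  by_contra hcon
  rw [Set.mem_Icc, not_and_or] at hcon
  push_neg at hcon
  rcases hcon with h | h
  · -- θ < γ - π/2 : value bound via key_sin_pow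
    set x := θ + π/2 with hx
    have hx0 : 0 ≤ x := by simp only [hx]; linarith
    have hxγ : x < γ := by simp only [hx]; linarith
    have hcos1 : Real.cos θ = Real.sin x := by
      rw [show θ = x - π/2 by simp [hx], show x - π/2 = -(π/2 - x) by ring,
        Real.cos_neg, Real.cos_pi_div_two_sub]
    have hcos2 : Real.cos (θ - γ) = -Real.sin (γ - x) := by
      rw [show θ - γ = -(π/2 + (γ - x)) by simp [hx]; ring, Real.cos_neg,
        Real.cos_add, Real.cos_pi_div_two, Real.sin_pi_div_two]
      ring
    have hsgx : 0 < Real.sin (γ - x) :=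
      Real.sin_pos_of_pos_of_lt_pi (by linarith) (by nlinarith)
    have hbound : Ff d α β γ θ ≤ α * Real.sin x ^ d + β * Real.sin (γ - x) ^ d := by
      rw [Ff, hcos1, hcos2]
      have : -(β * (-Real.sin (γ-x)) ^ d) ≤ β * Real.sin (γ-x) ^ d := by
        rcases Nat.even_or_odd d with he | ho
        · rw [he.neg_pow]
          nlinarith [pow_nonneg hsgx.le d]
        · rw [ho.neg_pow]; ring_nf; exact le_refl _
      linarith
    have hkey : Real.sin x ^ d + Real.sin (γ - x) ^ d ≤ Real.sin γ ^ d := by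
      have := key_sin_pow hd hx0 (le_of_lt (by linarith : (0:ℝ) < γ - x))
        (by rw [show x + (γ - x) = γ by ring]; exact hγ2)
      rwa [show x + (γ - x) = γ by ring] at this
    have : Ff d α β γ θ < α * Real.sin γ ^ d := by
      have h1 : β * Real.sin (γ - x) ^ d < α * Real.sin (γ - x) ^ d := by
        have := pow_pos hsgx d; nlinarith
      nlinarith
    linarith
  · -- 0 < θ
    rcases lt_or_ge θ γ with h2 | h2
    · -- 0 < θ < γ : derivative contradiction
      have hcrit : α * pf d θ = β * pf d (θ - γ) :=
        crit_eq hd (fun t => by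
          calc Ff d α β γ t ≤ |Ff d α β γ t| := le_abs_self _
            _ ≤ M := hub t
            _ = Ff d α β γ θ := hFθ.symm)
      have hp1 : 0 < pf d θ := pf_pos h (by linarith)
      have hp2 : pf d (θ - γ) < 0 := by
        rw [show θ - γ = -(γ - θ) by ring, pf_neg, neg_lt, neg_zero]
        exact pf_pos (by linarith) (by linarith)
      nlinarith
    · -- γ ≤ θ ≤ π/2 : reflection strict
      have hc1 : Real.cos θ < Real.cos (θ - γ) := by
        apply Real.strictAntiOn_cos ⟨by linarith, by linarith⟩ ⟨by linarith, by linarith⟩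
        linarith
      have hc0 : 0 ≤ Real.cos θ := Real.cos_nonneg_of_mem_Icc ⟨by linarith, hθ2⟩
      have hpow : Real.cos θ ^ d < Real.cos (θ - γ) ^ d :=
        pow_lt_pow_left₀ hc1 hc0 (by omega)
      have hrefl := Ff_reflect d α β γ θ
      have : Ff d α β γ θ < Ff d α β γ (γ - θ) := by
        rw [hrefl, Ff]
        nlinarith
      have := hub (γ - θ)
      have h3 : Ff d α β γ (γ - θ) ≤ M := le_trans (le_abs_self _) this
      linarith

lemma negcase {d : ℕ} (hd : 2 ≤ d) {α β γ M θ : ℝ} (hβ : 0 < β) (hαβ : β < α)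
    (hγ0 : 0 < γ) (hγ2 : γ ≤ π / 2)
    (hub : ∀ t, |Ff d α β γ t| ≤ M) (hMpos : 0 < M)
    (hθ : θ ∈ Icc (-(π/2)) (π/2)) (hFθ : Ff d α β γ θ = -M) : False := by
  have hα : 0 < α := lt_trans hβ hαβ
  have hπ := Real.pi_pos
  obtain ⟨hθ1, hθ2⟩ := hθ
  have hrefl := Ff_reflect d α β γ θ
  have hFr : Ff d α β γ (γ - θ) ≤ M := le_trans (le_abs_self _) (hub _)
  -- identity: Ff(γ-θ) + Ff θ = (α-β)(cos θ^d + cos(θ-γ)^d)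
  have hid : Ff d α β γ (γ - θ) + Ff d α β γ θ
      = (α - β) * (Real.cos θ ^ d + Real.cos (θ - γ) ^ d) := by
    rw [hrefl, Ff]; ring
  rcases Nat.even_or_odd d with he | ho
  · -- d even
    have hC : 0 ≤ Real.cos θ ^ d := he.pow_nonneg _
    have hC' : 0 ≤ Real.cos (θ - γ) ^ d := he.pow_nonneg _
    have hsum : (α - β) * (Real.cos θ ^ d + Real.cos (θ - γ) ^ d) ≤ 0 := by
      nlinarith
    have h0 : Real.cos θ ^ d + Real.cos (θ - γ) ^ d ≤ 0 := by nlinarith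
    have e1 : Real.cos θ ^ d = 0 := by nlinarith
    have e2 : Real.cos (θ - γ) ^ d = 0 := by nlinarith
    have : Ff d α β γ θ = 0 := by rw [Ff, e1, e2]; ring
    linarith
  · -- d odd
    rcases le_or_gt (γ - π/2) θ with hcase | hcase
    · have hcosθ : 0 ≤ Real.cos θ := Real.cos_nonneg_of_mem_Icc ⟨by linarith, hθ2⟩
      have hcosθγ : 0 ≤ Real.cos (θ - γ) :=
        Real.cos_nonneg_of_mem_Icc ⟨by linarith, by linarith⟩
      have hC : 0 ≤ Real.cos θ ^ d := pow_nonneg hcosθ _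
      have hC' : 0 ≤ Real.cos (θ - γ) ^ d := pow_nonneg hcosθγ _
      have hpos : 0 < Real.cos θ ^ d + Real.cos (θ - γ) ^ d := by
        rcases lt_or_eq_of_le hC with h | h
        · linarith
        rcases lt_or_eq_of_le hC' with h' | h'
        · linarith
        exfalso
        have e1 : Real.cos θ = 0 := (pow_eq_zero_iff (by omega : d ≠ 0)).mp h.symm
        have e2 : Real.cos (θ - γ) = 0 := (pow_eq_zero_iff (by omega : d ≠ 0)).mp h'.symm
        -- cos θ = 0 with θ ∈ [-π/2, π/2] and θ ≥ γ - π/2 > -π/2 forces θ = π/2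
        have hθpi : θ = π/2 := by
          by_contra hne
          have : 0 < Real.cos θ := Real.cos_pos_of_mem_Ioo
            ⟨by linarith, lt_of_le_of_ne hθ2 hne⟩
          linarith
        rw [hθpi, Real.cos_pi_div_two_sub] at e2
        have : 0 < Real.sin γ := Real.sin_pos_of_pos_of_lt_pi hγ0 (by nlinarith)
        linarith
      nlinarith
    · -- θ < γ - π/2 : cos(θ-γ) < 0, d odd
      have hcosneg : Real.cos (θ - γ) < 0 := by
        rw [show θ - γ = -(γ - θ) by ring, Real.cos_neg]
        apply Real.cos_neg_of_pi_div_two_lt_of_lt (by linarith)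
        linarith
      have hC' : Real.cos (θ - γ) ^ d < 0 := ho.pow_neg hcosneg
      have hcosθ : 0 ≤ Real.cos θ := Real.cos_nonneg_of_mem_Icc ⟨by linarith, hθ2⟩
      have hC : 0 ≤ Real.cos θ ^ d := pow_nonneg hcosθ _
      have : 0 < Ff d α β γ θ := by rw [Ff]; nlinarith
      linarith

lemma Ff_periodic (d : ℕ) (α β γ t : ℝ) (z : ℤ) :
    Ff d α β γ (t - z * (2 * π)) = Ff d α β γ t := by
  rw [Ff, Ff, Real.cos_sub_int_mul_two_pi,
    show t - z * (2*π) - γ = (t - γ) - z * (2*π) by ring, Real.cos_sub_int_mul_two_pi]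

lemma Ff_antipode (d : ℕ) (α β γ t : ℝ) :
    Ff d α β γ (t + π) = (-1 : ℝ) ^ d * Ff d α β γ t := by
  rw [Ff, Ff, Real.cos_add_pi, show t + π - γ = (t - γ) + π by ring, Real.cos_add_pi]
  rw [show -Real.cos t = (-1) * Real.cos t by ring,
    show -Real.cos (t - γ) = (-1) * Real.cos (t - γ) by ring, mul_pow, mul_pow]
  ring

lemma master {d : ℕ} (hd : 2 ≤ d) {α β γ M : ℝ} (hβ : 0 < β) (hαβ : β < α)
    (hγ0 : 0 < γ) (hγ2 : γ ≤ π / 2)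
    (hub : ∀ t, |Ff d α β γ t| ≤ M) (hMpos : 0 < M)
    (hMlow : α * Real.sin γ ^ d ≤ M)
    {θ : ℝ} (hFθ : |Ff d α β γ θ| = M) :
    ∃ θh ∈ Icc (γ - π/2) 0, Ff d α β γ θh = M ∧
      ((Real.cos θ = Real.cos θh ∧ Real.sin θ = Real.sin θh) ∨
       (Real.cos θ = -Real.cos θh ∧ Real.sin θ = -Real.sin θh)) := by
  have hπ := Real.pi_pos
  -- reduce θ mod 2π into Ioc (-(π/2)) (3π/2)
  have h2π : (0:ℝ) < 2 * π := by linarith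
  set θ₀ := toIocMod h2π (-(π/2)) θ with hθ₀def
  have hmem : θ₀ ∈ Ioc (-(π/2)) (-(π/2) + 2*π) := toIocMod_mem_Ioc h2π _ θ
  have hsub : θ - θ₀ = (toIocDiv h2π (-(π/2)) θ : ℤ) * (2 * π) := by
    rw [hθ₀def, self_sub_toIocMod h2π]
    simp [zsmul_eq_mul]
  set z := toIocDiv h2π (-(π/2)) θ with hzdef
  have hθeq : θ₀ = θ - z * (2 * π) := by linarith [hsub]
  have hcs0 : Real.cos θ₀ = Real.cos θ ∧ Real.sin θ₀ = Real.sin θ := by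
    rw [hθeq]
    constructor
    · exact Real.cos_sub_int_mul_two_pi θ z
    · exact Real.sin_sub_int_mul_two_pi θ z
  have hF0 : Ff d α β γ θ₀ = Ff d α β γ θ := by rw [hθeq]; exact Ff_periodic d α β γ θ z
  -- now place θ₁ in Icc (-(π/2)) (π/2), with sign ε
  rcases le_or_gt θ₀ (π/2) with hcase | hcase
  · -- θ₁ = θ₀
    have hθ₁mem : θ₀ ∈ Icc (-(π/2)) (π/2) := ⟨hmem.1.le, hcase⟩
    have habs : |Ff d α β γ θ₀| = M := by rw [hF0]; exact hFθ
    rcases abs_eq (le_of_lt hMpos) |>.mp habs with hpos | hneg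
    · refine ⟨θ₀, exclude hd hβ hαβ hγ0 hγ2 hub hMpos hMlow hθ₁mem hpos, hpos, ?_⟩
      left; exact ⟨hcs0.1.symm, hcs0.2.symm⟩
    · exact absurd (negcase hd hβ hαβ hγ0 hγ2 hub hMpos hθ₁mem hneg) (fun h => h)
  · -- θ₁ = θ₀ - π
    set θ₁ := θ₀ - π with hθ₁def
    have hθ₁mem : θ₁ ∈ Icc (-(π/2)) (π/2) := by
      constructor
      · simp only [hθ₁def]; linarith
      · simp only [hθ₁def]; linarith [hmem.2]
    have hcs1 : Real.cos θ₀ = -Real.cos θ₁ ∧ Real.sin θ₀ = -Real.sin θ₁ := by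
      rw [hθ₁def]
      constructor
      · rw [← Real.cos_add_pi (θ₀ - π), show θ₀ - π + π = θ₀ by ring]
      · rw [← Real.sin_add_pi (θ₀ - π), show θ₀ - π + π = θ₀ by ring]
    have hF1 : Ff d α β γ θ₀ = (-1:ℝ)^d * Ff d α β γ θ₁ := by
      rw [← Ff_antipode, hθ₁def, show θ₀ - π + π = θ₀ by ring]
    have habs : |Ff d α β γ θ₁| = M := by
      have : |Ff d α β γ θ₀| = M := by rw [hF0]; exact hFθ
      rw [hF1, abs_mul, abs_pow, abs_neg, abs_one, one_pow, one_mul] at this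
      exact this
    rcases abs_eq (le_of_lt hMpos) |>.mp habs with hpos | hneg
    · refine ⟨θ₁, exclude hd hβ hαβ hγ0 hγ2 hub hMpos hMlow hθ₁mem hpos, hpos, ?_⟩
      right
      constructor
      · rw [← hcs0.1, hcs1.1]
      · rw [← hcs0.2, hcs1.2]
    · exact absurd (negcase hd hβ hαβ hγ0 hγ2 hub hMpos hθ₁mem hneg) (fun h => h)

lemma core {d : ℕ} (hd : 2 ≤ d) {α β γ : ℝ} (hβ : 0 < β) (hαβ : β < α)
    (hγ0 : 0 < γ) (hγ2 : γ ≤ π / 2) :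
    ∃ θs, (∀ θ, |Ff d α β γ θ| ≤ Ff d α β γ θs) ∧
      (∀ θ, |Ff d α β γ θ| = Ff d α β γ θs →
        ((Real.cos θ = Real.cos θs ∧ Real.sin θ = Real.sin θs) ∨
         (Real.cos θ = -Real.cos θs ∧ Real.sin θ = -Real.sin θs))) := by
  have hα : 0 < α := lt_trans hβ hαβ
  have hπ := Real.pi_pos
  have hcont : Continuous (Ff d α β γ) := by
    unfold Ff; fun_prop
  -- maximize |F| over a period
  obtain ⟨θm, _, hθm⟩ := (isCompact_Icc (a := -(π/2)) (b := -(π/2) + 2*π)).exists_isMaxOn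
    (Set.nonempty_Icc.mpr (by linarith)) hcont.abs.continuousOn
  set M := |Ff d α β γ θm| with hMdef
  have hub : ∀ t, |Ff d α β γ t| ≤ M := by
    intro t
    have h2π : (0:ℝ) < 2 * π := by linarith
    have hmem := toIocMod_mem_Ioc h2π (-(π/2)) t
    have hsub : toIocMod h2π (-(π/2)) t = t - (toIocDiv h2π (-(π/2)) t : ℤ) * (2*π) := by
      have := self_sub_toIocMod h2π (-(π/2)) t
      rw [zsmul_eq_mul] at this
      linarith
    have : |Ff d α β γ (toIocMod h2π (-(π/2)) t)| ≤ M :=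
      hθm ⟨hmem.1.le, hmem.2⟩
    rwa [hsub, Ff_periodic] at this
  have hsinγ : 0 < Real.sin γ := Real.sin_pos_of_pos_of_lt_pi hγ0 (by nlinarith)
  have hcosγ0 : 0 ≤ Real.cos γ := Real.cos_nonneg_of_mem_Icc ⟨by linarith, hγ2⟩
  have hcosγ1 : Real.cos γ < 1 := by
    rcases lt_or_eq_of_le (Real.cos_le_one γ) with h | h
    · exact h
    · exfalso
      have := Real.sin_sq_add_cos_sq γ
      nlinarith
  have hF0 : Ff d α β γ 0 = α - β * Real.cos γ ^ d := by
    rw [Ff, Real.cos_zero, one_pow, zero_sub, Real.cos_neg]; ring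
  have hMpos : 0 < M := by
    have h1 : Ff d α β γ 0 ≤ M := le_trans (le_abs_self _) (hub 0)
    have h2 : Real.cos γ ^ d ≤ 1 := pow_le_one₀ hcosγ0 hcosγ1.le
    have : 0 < α - β * Real.cos γ ^ d := by nlinarith
    linarith [hF0 ▸ h1]
  have hMlow : α * Real.sin γ ^ d ≤ M := by
    have h1 : Ff d α β γ (γ - π/2) ≤ M := le_trans (le_abs_self _) (hub _)
    have e1 : Real.cos (γ - π/2) = Real.sin γ := by
      rw [show γ - π/2 = -(π/2 - γ) by ring, Real.cos_neg, Real.cos_pi_div_two_sub]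
    have e2 : Real.cos (γ - π/2 - γ) = 0 := by
      rw [show γ - π/2 - γ = -(π/2) by ring, Real.cos_neg, Real.cos_pi_div_two]
    rw [Ff, e1, e2, zero_pow (by omega : d ≠ 0), mul_zero, sub_zero] at h1
    exact h1
  obtain ⟨θs, hθsK, hθsF, _⟩ := master hd hβ hαβ hγ0 hγ2 hub hMpos hMlow (hMdef.symm)
  refine ⟨θs, ?_, ?_⟩
  · intro θ; rw [hθsF]; exact hub θ
  · intro θ hθ
    rw [hθsF] at hθ
    obtain ⟨θh, hθhK, hθhF, hrel⟩ := master hd hβ hαβ hγ0 hγ2 hub hMpos hMlow hθ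
    have : θh = θs := uniq_in_K hd hβ hαβ hγ0 hγ2 hub hθhK hθsK hθhF hθsF
    rw [← this]
    exact hrel

open Real Set RealInnerProductSpace

set_option maxHeartbeats 2000000 in
theorem unique_best_rank_one (d n : ℕ) (hd : 2 ≤ d) (α β : ℝ) (hαβ : β < α) (hβ : 0 < β)
    (u v : EuclideanSpace ℝ (Fin n)) (huv : u ≠ v) (hu : ‖u‖ = 1) (hv : ‖v‖ = 1)
    (hip : 0 ≤ ⟪u, v⟫) :
    ∃ w₀ : EuclideanSpace ℝ (Fin n), ‖w₀‖ = 1 ∧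
      (∀ w : EuclideanSpace ℝ (Fin n), ‖w‖ = 1 →
        |α * ⟪u, w⟫ ^ d - β * ⟪v, w⟫ ^ d| ≤ |α * ⟪u, w₀⟫ ^ d - β * ⟪v, w₀⟫ ^ d|) ∧
      (∀ w : EuclideanSpace ℝ (Fin n), ‖w‖ = 1 →
        (∀ w' : EuclideanSpace ℝ (Fin n), ‖w'‖ = 1 →
          |α * ⟪u, w'⟫ ^ d - β * ⟪v, w'⟫ ^ d| ≤ |α * ⟪u, w⟫ ^ d - β * ⟪v, w⟫ ^ d|) →
        w = w₀ ∨ w = -w₀) := by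
  have hα : 0 < α := lt_trans hβ hαβ
  set c : ℝ := ⟪u, v⟫ with hc
  have huu : ⟪u, u⟫ = 1 := by rw [real_inner_self_eq_norm_sq, hu]; norm_num
  have hvv : ⟪v, v⟫ = 1 := by rw [real_inner_self_eq_norm_sq, hv]; norm_num
  have hc1 : c < 1 := by
    rcases lt_or_eq_of_le (by simpa [hu, hv] using real_inner_le_norm u v : c ≤ 1) with h | h
    · exact h
    · exact absurd ((inner_eq_one_iff_of_norm_eq_one (𝕜 := ℝ) hu hv).mp h) huv
  have hs2 : (0:ℝ) < 1 - c^2 := by nlinarith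
  set s : ℝ := Real.sqrt (1 - c^2) with hsdef
  have hs : 0 < s := Real.sqrt_pos.mpr hs2
  have hs2' : s^2 = 1 - c^2 := Real.sq_sqrt hs2.le
  set e : EuclideanSpace ℝ (Fin n) := s⁻¹ • (v - c • u) with hedef
  have hue : ⟪u, e⟫ = 0 := by
    rw [hedef, real_inner_smul_right, inner_sub_right, real_inner_smul_right, huu, hc]
    ring
  have hee : ⟪e, e⟫ = 1 := by
    rw [hedef, real_inner_smul_left, real_inner_smul_right, inner_sub_left,
      inner_sub_right, inner_sub_right, real_inner_smul_left, real_inner_smul_right,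
      real_inner_smul_left, real_inner_smul_right, huu, hvv, real_inner_comm u v, ← hc]
    field_simp
    nlinarith [hs2']
  have hve : v = c • u + s • e := by
    rw [hedef, smul_inv_smul₀ (ne_of_gt hs)]
    abel
  have heu : ⟪e, u⟫ = 0 := by rw [real_inner_comm]; exact hue
  have hvw : ∀ w : EuclideanSpace ℝ (Fin n), ⟪v, w⟫ = c * ⟪u, w⟫ + s * ⟪e, w⟫ := by
    intro w
    rw [hve, inner_add_left, real_inner_smul_left, real_inner_smul_left]
  have DEC : ∀ w : EuclideanSpace ℝ (Fin n),
      ‖w - (⟪u, w⟫ • u + ⟪e, w⟫ • e)‖^2 = ‖w‖^2 - ⟪u, w⟫^2 - ⟪e, w⟫^2 := by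
    intro w
    rw [← real_inner_self_eq_norm_sq, ← real_inner_self_eq_norm_sq]
    simp only [inner_sub_left, inner_sub_right, inner_add_left, inner_add_right,
      real_inner_smul_left, real_inner_smul_right, huu, hee, hue, heu,
      real_inner_comm w u, real_inner_comm w e]
    ring
  have COMP : ∀ x y : ℝ, ⟪u, x • u + y • e⟫ = x ∧ ⟪e, x • u + y • e⟫ = y := by
    intro x y
    constructor <;>
    · rw [inner_add_right, real_inner_smul_right, real_inner_smul_right]
      simp only [huu, hee, hue, heu, mul_one, mul_zero, add_zero, zero_add]
  -- angle setup
  set γ : ℝ := Real.arccos c with hγdef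
  have hγ0 : 0 < γ := Real.arccos_pos.mpr hc1
  have hγ2 : γ ≤ π / 2 := Real.arccos_le_pi_div_two.mpr hip
  have hcosγ : Real.cos γ = c := Real.cos_arccos (by nlinarith) hc1.le
  have hsinγ : Real.sin γ = s := by rw [hγdef, Real.sin_arccos, hsdef]
  obtain ⟨θs, hmax, huniq⟩ := core hd hβ hαβ hγ0 hγ2
  set M : ℝ := Ff d α β γ θs with hMdef
  have hM0 : 0 < M := by
    have h1 : Ff d α β γ 0 ≤ M := le_trans (le_abs_self _) (hmax 0)
    have hF0 : Ff d α β γ 0 = α - β * c ^ d := by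
      rw [Ff, Real.cos_zero, one_pow, zero_sub, Real.cos_neg, hcosγ]; ring
    have hcd : c ^ d ≤ 1 := pow_le_one₀ hip hc1.le
    nlinarith
  -- value correspondence on the unit circle of the (u,e) plane
  have VAL : ∀ θ : ℝ, α * ⟪u, Real.cos θ • u + Real.sin θ • e⟫ ^ d
      - β * ⟪v, Real.cos θ • u + Real.sin θ • e⟫ ^ d = Ff d α β γ θ := by
    intro θ
    obtain ⟨h1, h2⟩ := COMP (Real.cos θ) (Real.sin θ)
    rw [h1, hvw, h1, h2, Ff]
    congr 2
    rw [Real.cos_sub, hcosγ, hsinγ]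
    ring
  set ws : EuclideanSpace ℝ (Fin n) := Real.cos θs • u + Real.sin θs • e with hwsdef
  have hnws : ‖ws‖ = 1 := by
    have h2 : ‖ws‖^2 = 1 := by
      rw [← real_inner_self_eq_norm_sq, hwsdef]
      simp only [inner_add_left, inner_add_right, real_inner_smul_left, real_inner_smul_right,
        huu, hee, hue, heu]
      nlinarith [Real.sin_sq_add_cos_sq θs]
    nlinarith [norm_nonneg ws]
  have hfws : α * ⟪u, ws⟫ ^ d - β * ⟪v, ws⟫ ^ d = M := VAL θs
  -- global bound for unit vectors
  have GB : ∀ w : EuclideanSpace ℝ (Fin n), ‖w‖ = 1 →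
      |α * ⟪u, w⟫ ^ d - β * ⟪v, w⟫ ^ d| ≤ M ∧
      (⟪u, w⟫^2 + ⟪e, w⟫^2 < 1 → |α * ⟪u, w⟫ ^ d - β * ⟪v, w⟫ ^ d| < M) := by
    intro w hw
    set x : ℝ := ⟪u, w⟫ with hx
    set y : ℝ := ⟪e, w⟫ with hy
    have hxy : x^2 + y^2 ≤ 1 := by
      have hD := DEC w
      rw [hw, ← hx, ← hy] at hD
      nlinarith [sq_nonneg (‖w - (x • u + y • e)‖)]
    have hfw : α * ⟪u, w⟫ ^ d - β * ⟪v, w⟫ ^ d = α * x^d - β * (c*x + s*y)^d := by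
      rw [hvw, ← hx, ← hy]
    rcases eq_or_lt_of_le (by positivity : (0:ℝ) ≤ x^2 + y^2) with hr0 | hrpos
    · have hx0 : x = 0 := by nlinarith
      have hy0 : y = 0 := by nlinarith
      have : α * ⟪u, w⟫ ^ d - β * ⟪v, w⟫ ^ d = 0 := by
        rw [hfw, hx0, hy0]
        norm_num [zero_pow (show d ≠ 0 by omega)]
      rw [this, abs_zero]
      exact ⟨hM0.le, fun _ => hM0⟩
    · set r : ℝ := Real.sqrt (x^2 + y^2) with hrdef
      have hr : 0 < r := Real.sqrt_pos.mpr hrpos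
      have hr2 : r^2 = x^2 + y^2 := Real.sq_sqrt hrpos.le
      have hr1 : r ≤ 1 := by rw [hrdef]; exact Real.sqrt_le_one.mpr hxy
      have hcirc : (x/r)^2 + (y/r)^2 = 1 := by
        field_simp
        linarith
      obtain ⟨θ, hcθ, hsθ⟩ := exists_angle hcirc
      have hxr : x = r * Real.cos θ := by rw [hcθ]; field_simp
      have hyr : y = r * Real.sin θ := by rw [hsθ]; field_simp
      have hscale : α * x^d - β * (c*x + s*y)^d = r^d * Ff d α β γ θ := by
        rw [hxr, hyr, Ff, show c * (r * Real.cos θ) + s * (r * Real.sin θ)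
          = r * (Real.cos θ * Real.cos γ + Real.sin θ * Real.sin γ) by rw [hcosγ, hsinγ]; ring,
          ← Real.cos_sub, mul_pow, mul_pow]
        ring
      have habs : |α * ⟪u, w⟫ ^ d - β * ⟪v, w⟫ ^ d| = r^d * |Ff d α β γ θ| := by
        rw [hfw, hscale, abs_mul, abs_of_nonneg (by positivity : (0:ℝ) ≤ r^d)]
      constructor
      · rw [habs]
        calc r^d * |Ff d α β γ θ| ≤ 1 * M := by
              apply mul_le_mul (pow_le_one₀ hr.le hr1) (hmax θ) (abs_nonneg _) zero_le_one
          _ = M := one_mul M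
      · intro hlt
        have hrlt : r < 1 := by
          apply lt_of_le_of_ne hr1
          intro heq
          rw [heq] at hr2
          norm_num at hr2
          linarith
        rw [habs]
        calc r^d * |Ff d α β γ θ| ≤ r^d * M := by
              apply mul_le_mul_of_nonneg_left (hmax θ) (by positivity)
          _ < 1 * M := by
              apply mul_lt_mul_of_pos_right (pow_lt_one₀ hr.le hrlt (by omega)) hM0
          _ = M := one_mul M
  refine ⟨ws, hnws, ?_, ?_⟩
  · intro w hw
    have := (GB w hw).1
    rw [hfws]
    calc |α * ⟪u, w⟫ ^ d - β * ⟪v, w⟫ ^ d| ≤ M := this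
      _ ≤ |M| := le_abs_self M
  · intro w hw Hw
    set x : ℝ := ⟪u, w⟫ with hx
    set y : ℝ := ⟪e, w⟫ with hy
    have hfwM : |α * ⟪u, w⟫ ^ d - β * ⟪v, w⟫ ^ d| = M := by
      apply le_antisymm (GB w hw).1
      calc M = α * ⟪u, ws⟫ ^ d - β * ⟪v, ws⟫ ^ d := hfws.symm
        _ ≤ |α * ⟪u, ws⟫ ^ d - β * ⟪v, ws⟫ ^ d| := le_abs_self _
        _ ≤ |α * ⟪u, w⟫ ^ d - β * ⟪v, w⟫ ^ d| := Hw ws hnws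
    have hxy1 : x^2 + y^2 = 1 := by
      rcases lt_or_eq_of_le (by
        have hD := DEC w
        rw [hw, ← hx, ← hy] at hD
        nlinarith [sq_nonneg (‖w - (x • u + y • e)‖)] : x^2 + y^2 ≤ 1) with h | h
      · exact absurd hfwM (ne_of_lt ((GB w hw).2 h))
      · exact h
    have hweq : w = x • u + y • e := by
      have hD := DEC w
      rw [hw, ← hx, ← hy] at hD
      have : ‖w - (x • u + y • e)‖^2 = 0 := by rw [hD]; nlinarith
      have h0 : ‖w - (x • u + y • e)‖ = 0 := by nlinarith [norm_nonneg (w - (x • u + y • e))]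
      have := norm_eq_zero.mp h0
      rw [sub_eq_zero] at this
      exact this
    obtain ⟨θ, hcθ, hsθ⟩ := exists_angle hxy1
    have hFθ : |Ff d α β γ θ| = M := by
      rw [← hfwM, ← VAL θ, hcθ, hsθ, ← hweq]
    rcases huniq θ hFθ with ⟨h1, h2⟩ | ⟨h1, h2⟩
    · left
      rw [hweq, hwsdef, ← hcθ, ← hsθ, h1, h2]
    · right
      rw [hweq, hwsdef, ← hcθ, ← hsθ, h1, h2, neg_add, neg_smul, neg_smul]
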